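/- Let a, ρ, γ₁, γ₂ be real numbers with 0 < ρ < a, γ₁ > 0 and γ₂ > 0. Then the two point vortices of the steady dipole configuration translate with a common horizontal speed, i.e. −γ₁/(4π(a−ρ)) + (γ₂/(4π))(1/a + 1/ρ) = γ₁/(4πρ) − γ₁/(4πa) + γ₂/(4π(a+ρ)), if and only if the compatibility condition γ₂ = ((a³+ρ³)/(a³−ρ³))·γ₁ holds. -/

import Mathlib

open Real

/-- The two point vortices of the steady dipole configuration translate with a common
horizontal speed if and only if the compatibility condition
`γ₂ = ((a³+ρ³)/(a³−ρ³))·γ₁` holds. -/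
theorem dipole_common_speed_iff_compatibility
    (a ρ γ₁ γ₂ : ℝ) (hρ : 0 < ρ) (hρa : ρ < a) (hγ₁ : 0 < γ₁) (hγ₂ : 0 < γ₂) :
    -γ₁ / (4 * π * (a - ρ)) + (γ₂ / (4 * π)) * (1 / a + 1 / ρ) =
      γ₁ / (4 * π * ρ) - γ₁ / (4 * π * a) + γ₂ / (4 * π * (a + ρ)) ↔
    γ₂ = ((a ^ 3 + ρ ^ 3) / (a ^ 3 - ρ ^ 3)) * γ₁ := by
  have ha : 0 < a := hρ.trans hρa
  have h1 : a - ρ ≠ 0 := sub_ne_zero.mpr hρa.ne'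
  have h2 : a + ρ ≠ 0 := by positivity
  have h3 : (0:ℝ) < a ^ 3 - ρ ^ 3 := sub_pos.mpr (pow_lt_pow_left₀ hρa hρ.le (by norm_num))
  have hπ := pi_ne_zero
  field_simp
  constructor
  · intro h
    have hc : (256 * π ^ 4 * a * ρ) ≠ 0 := by positivity
    refine mul_left_cancel₀ hc ?_
    linear_combination (256 * π ^ 4 * a * ρ) * h
  · intro h
    linear_combination h
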